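/- Let φ and ψ be propositional formulas over a finite variable set V such that φ ⊨_min ψ. Then the formula φ ∧ ψ (whose models are exactly the valuations satisfying both φ and ψ) has the same set of minimal models as φ. -/
import Mathlib


variable {V : Type*} [Fintype V]

/-- Pointwise order on valuations: `ν' ≤ ν` iff every variable true in `ν'` is true in `ν`. -/
def VLE (ν' ν : V → Bool) : Prop := ∀ x, ν' x = true → ν x = true

/-- `ν` is a minimal model of `φ`: it is a model and no strictly smaller valuation is a model. -/
def IsMinimalModel (φ : (V → Bool) → Prop) (ν : V → Bool) : Prop :=
  φ ν ∧ ¬ ∃ ν', VLE ν' ν ∧ ν' ≠ ν ∧ φ ν'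

/-- `φ ⊨_min ψ`: every minimal model of `φ` satisfies `ψ`. -/
def EntailsMin (φ ψ : (V → Bool) → Prop) : Prop :=
  ∀ ν, IsMinimalModel φ ν → ψ ν

/-- `ν[S↦0]`: the valuation agreeing with `ν` outside `S` and assigning `false` on `S`. -/
noncomputable def setZero (ν : V → Bool) (S : Set V) : V → Bool :=
  fun x => @ite _ (x ∈ S) (Classical.propDecidable _) false (ν x)

/-- `x` is free for negation in `φ`: every minimal model of `φ` assigns `false` to `x`. -/
def FreeForNegation (φ : (V → Bool) → Prop) (x : V) : Prop :=
  ∀ ν, IsMinimalModel φ ν → ν x = false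

lemma exists_min_below (φ : (V → Bool) → Prop) :
    ∀ ν : V → Bool, φ ν → ∃ μ, VLE μ ν ∧ IsMinimalModel φ μ := by
  classical
  suffices H : ∀ n (ν : V → Bool), (Finset.univ.filter (fun x => ν x = true)).card = n →
      φ ν → ∃ μ, VLE μ ν ∧ IsMinimalModel φ μ by
    intro ν hφ; exact H _ ν rfl hφ
  intro n
  induction n using Nat.strong_induction_on with
  | _ n ih =>
    intro ν hn hφ
    by_cases hmin : IsMinimalModel φ ν
    · exact ⟨ν, fun x hx => hx, hmin⟩
    · have : ∃ ν', VLE ν' ν ∧ ν' ≠ ν ∧ φ ν' := by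
        by_contra hc
        exact hmin ⟨hφ, hc⟩
      obtain ⟨ν', hle, hne, hφ'⟩ := this
      have hsub : (Finset.univ.filter (fun x => ν' x = true)) ⊂
          (Finset.univ.filter (fun x => ν x = true)) := by
        constructor
        · intro x hx
          simp only [Finset.mem_filter, Finset.mem_univ, true_and] at hx ⊢
          exact hle x hx
        · intro hrev
          apply hne
          funext x
          cases hx : ν x
          · cases hx' : ν' x
            · rfl
            · rw [hle x hx'] at hx; exact absurd hx (by simp)
          · cases hx' : ν' x
            · have hmem := hrev (Finset.mem_filter.mpr ⟨Finset.mem_univ x, hx⟩)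
              rw [Finset.mem_filter] at hmem
              rw [hmem.2] at hx'
              exact absurd hx' (by simp)
            · rfl
      have hcard := Finset.card_lt_card hsub
      obtain ⟨μ, hμle, hμmin⟩ := ih _ (hn ▸ hcard) ν' rfl hφ'
      exact ⟨μ, fun x hx => hle x (hμle x hx), hμmin⟩

theorem stmt_8 (φ ψ : (V → Bool) → Prop) (h : EntailsMin φ ψ) :
    ∀ ν : V → Bool,
      IsMinimalModel (fun ν => φ ν ∧ ψ ν) ν ↔ IsMinimalModel φ ν := by
  intro ν
  constructor
  · rintro ⟨⟨hφν, hψν⟩, hnot⟩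
    refine ⟨hφν, ?_⟩
    rintro ⟨ν', hle, hne, hφ'⟩
    obtain ⟨μ, hμle, hμmin⟩ := exists_min_below φ ν' hφ'
    have hψμ := h μ hμmin
    have hμν : VLE μ ν := fun x hx => hle x (hμle x hx)
    have hμne : μ ≠ ν := by
      intro heq
      apply hne
      funext x
      cases hx : ν x
      · cases hx' : ν' x
        · rfl
        · rw [hle x hx'] at hx; exact absurd hx (by simp)
      · cases hx' : ν' x
        · have : μ x = true := heq ▸ hx
          have := hμle x this
          simp [hx'] at this
        · rfl
    exact hnot ⟨μ, hμν, hμne, hμmin.1, hψμ⟩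
  · rintro ⟨hφν, hnot⟩
    have hmin : IsMinimalModel φ ν := ⟨hφν, hnot⟩
    refine ⟨⟨hφν, h ν hmin⟩, ?_⟩
    rintro ⟨ν', hle, hne, hφ', _⟩
    exact hnot ⟨ν', hle, hne, hφ'⟩
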